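/- Let C be a commutative ring and λ ∈ C. The multiplication on the C-module ∏_{n∈ℕ} C·u_n of sequences u : ℕ → C determined by u_m·u_n = ∑_{k=0}^{m} binom(m+n−k, n)·binom(n, k)·λ^k·u_{m+n−k} (explicitly, (u·v)(j) = ∑_{m=0}^{j} ∑_{n=j−m}^{j} binom(j, n)·binom(n, m+n−j)·λ^{m+n−j}·u(m)·v(n)) makes ∏_{n∈ℕ} C·u_n into a commutative associative unital C-algebra, with identity element the sequence u_0 (i.e., the indicator sequence of 0). -/

import Mathlib

open Finset

/-- The multiplication on `∏_{n∈ℕ} C·u_n` of the weight-`λ` umbral algebra: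
`(u·v)(j) = ∑_{m=0}^{j} ∑_{n=j−m}^{j} binom(j,n)·binom(n,m+n−j)·λ^{m+n−j}·u(m)·v(n)`. -/
def umul {C : Type*} [CommRing C] (lam : C) (u v : ℕ → C) : ℕ → C :=
  fun j => ∑ m ∈ Finset.range (j + 1), ∑ n ∈ Finset.Icc (j - m) j,
    (j.choose n : C) * (n.choose (m + n - j) : C) * lam ^ (m + n - j) * u m * v n

/-- The indicator sequence of `0`, i.e. `u_0`. -/
def uone (C : Type*) [CommRing C] : ℕ → C := fun j => if j = 0 then 1 else 0


def TT (j m n : ℕ) : ℕ := if j ≤ m + n then j.choose n * n.choose (m + n - j) else 0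

lemma TT_zero_left {j m n : ℕ} (h : j < m) : TT j m n = 0 := by
  unfold TT
  split_ifs with hj
  · rw [Nat.choose_eq_zero_of_lt (show n < m + n - j by omega), mul_zero]
  · rfl

lemma TT_zero_right {j m n : ℕ} (h : j < n) : TT j m n = 0 := by
  unfold TT
  split_ifs with hj
  · rw [Nat.choose_eq_zero_of_lt h, zero_mul]
  · rfl

lemma TT_zero_add {j m n : ℕ} (h : m + n < j) : TT j m n = 0 := by
  unfold TT; rw [if_neg (by omega)]

lemma TT_symm (j m n : ℕ) : TT j m n = TT j n m := by
  unfold TT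
  rw [add_comm n m]
  split_ifs with hj
  · rcases Nat.lt_or_ge j m with h | hm
    · rw [Nat.choose_eq_zero_of_lt (show n < m + n - j by omega),
        Nat.choose_eq_zero_of_lt h, mul_zero, zero_mul]
    rcases Nat.lt_or_ge j n with h | hn
    · rw [Nat.choose_eq_zero_of_lt (show m < m + n - j by omega),
        Nat.choose_eq_zero_of_lt h, mul_zero, zero_mul]
    rw [Nat.choose_mul (n := j) (show m + n - j ≤ n by omega),
      Nat.choose_mul (n := j) (show m + n - j ≤ m by omega)]
    congr 1
    rw [show n - (m + n - j) = (j - (m + n - j)) - (m - (m + n - j)) by omega]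
    exact Nat.choose_symm (by omega)
  · rfl

lemma chain (x c i : ℕ) (hc : c ≤ x) :
    x.choose c * (x - c).choose i = x.choose (c + i) * (c + i).choose c := by
  rcases le_or_gt (c + i) x with h | h
  · have := Nat.choose_mul (n := x) (k := c + i) (s := c) (Nat.le_add_right c i)
    rw [Nat.add_sub_cancel_left] at this
    exact this.symm
  · rw [Nat.choose_eq_zero_of_lt h, Nat.choose_eq_zero_of_lt (show x - c < i by omega),
      mul_zero, zero_mul]

lemma prodA (x m n : ℕ) :
    x.choose m * x.choose n = ∑ a ∈ range (m + n + 1), TT a m n * x.choose a := by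
  rcases Nat.lt_or_ge x n with hx | hx
  · rw [Nat.choose_eq_zero_of_lt hx, mul_zero]
    symm; apply Finset.sum_eq_zero; intro a ha
    rcases le_or_gt a x with h | h
    · have : TT a m n = 0 := by
        unfold TT
        split_ifs with hj
        · rw [Nat.choose_eq_zero_of_lt (show a < n by omega), zero_mul]
        · rfl
      rw [this, zero_mul]
    · rw [Nat.choose_eq_zero_of_lt h, mul_zero]
  · have hv : x.choose m = ∑ k ∈ range (m + 1), n.choose k * (x - n).choose (m - k) := by
      conv_lhs => rw [show x = n + (x - n) by omega]
      rw [Nat.add_choose_eq, Finset.Nat.sum_antidiagonal_eq_sum_range_succ_mk]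
    rw [hv, Finset.sum_mul]
    conv_rhs => rw [← Finset.sum_range_reflect]
    symm
    rw [← Finset.sum_subset (Finset.range_subset_range.2 (show m + 1 ≤ m + n + 1 by omega))
      (fun k hk hk' => ?_)]
    · apply Finset.sum_congr rfl
      intro k hk
      have hkm : k ≤ m := by simpa [Nat.lt_succ_iff] using hk
      have h1 : m + n + 1 - 1 - k = m + n - k := by omega
      have h2 : m + n - (m + n - k) = k := by omega
      rw [h1]
      unfold TT
      rw [if_pos (by omega), h2]
      have hc := chain x n (m - k) hx
      rw [show n + (m - k) = m + n - k by omega] at hc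
      calc (m + n - k).choose n * n.choose k * x.choose (m + n - k)
          = n.choose k * (x.choose (m + n - k) * (m + n - k).choose n) := by ring
        _ = n.choose k * (x.choose n * (x - n).choose (m - k)) := by rw [← hc]
        _ = n.choose k * (x - n).choose (m - k) * x.choose n := by ring
    · -- vanishing terms k ∈ range (m+n+1) \ range (m+1)
      have hkm : m < k := by simpa [Nat.lt_succ_iff] using hk'
      have hkn : k ≤ m + n := by simpa [Nat.lt_succ_iff] using hk
      rw [show m + n + 1 - 1 - k = m + n - k by omega,
        TT_zero_right (show m + n - k < n by omega), zero_mul]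
lemma prodA_ext (x m n R : ℕ) (hR : m + n + 1 ≤ R) :
    x.choose m * x.choose n = ∑ a ∈ range R, TT a m n * x.choose a := by
  rw [prodA]
  apply Finset.sum_subset (Finset.range_subset_range.2 hR)
  intro a _ ha
  rw [TT_zero_add (by simp only [Finset.mem_range] at ha; omega), zero_mul]

lemma masterL (m n b x : ℕ) :
    ∑ p ∈ range (m + n + b + 1), (∑ a ∈ range (m + n + b + 1), TT p a b * TT a m n) * x.choose p
      = x.choose m * x.choose n * x.choose b := by
  symm
  calc x.choose m * x.choose n * x.choose b
      = ∑ a ∈ range (m + n + b + 1), TT a m n * x.choose a * x.choose b := by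
        rw [prodA_ext x m n (m + n + b + 1) (by omega), Finset.sum_mul]
    _ = ∑ a ∈ range (m + n + b + 1), TT a m n *
          ∑ p ∈ range (m + n + b + 1), TT p a b * x.choose p := by
        refine Finset.sum_congr rfl fun a _ => ?_
        rcases le_or_gt a (m + n) with h | h
        · rw [mul_assoc, prodA_ext x a b (m + n + b + 1) (by omega)]
        · rw [TT_zero_add h]; simp
    _ = ∑ p ∈ range (m + n + b + 1), (∑ a ∈ range (m + n + b + 1), TT p a b * TT a m n) *
          x.choose p := by
        simp only [Finset.mul_sum]
        rw [Finset.sum_comm]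
        refine Finset.sum_congr rfl fun p _ => ?_
        rw [Finset.sum_mul]
        refine Finset.sum_congr rfl fun a _ => by ring

lemma masterR (m n b x : ℕ) :
    ∑ p ∈ range (m + n + b + 1), (∑ c ∈ range (m + n + b + 1), TT p m c * TT c n b) * x.choose p
      = x.choose m * (x.choose n * x.choose b) := by
  symm
  calc x.choose m * (x.choose n * x.choose b)
      = ∑ c ∈ range (m + n + b + 1), TT c n b * (x.choose m * x.choose c) := by
        rw [prodA_ext x n b (m + n + b + 1) (by omega), Finset.mul_sum]
        refine Finset.sum_congr rfl fun c _ => by ring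
    _ = ∑ c ∈ range (m + n + b + 1), TT c n b *
          ∑ p ∈ range (m + n + b + 1), TT p m c * x.choose p := by
        refine Finset.sum_congr rfl fun c _ => ?_
        rcases le_or_gt c (n + b) with h | h
        · rw [prodA_ext x m c (m + n + b + 1) (by omega)]
        · rw [TT_zero_add h, zero_mul, zero_mul]
    _ = ∑ p ∈ range (m + n + b + 1), (∑ c ∈ range (m + n + b + 1), TT p m c * TT c n b) *
          x.choose p := by
        simp only [Finset.mul_sum]
        rw [Finset.sum_comm]
        refine Finset.sum_congr rfl fun p _ => ?_
        rw [Finset.sum_mul]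
        refine Finset.sum_congr rfl fun c _ => by ring

lemma key_aux (m n b : ℕ) : ∀ p,
    (∑ a ∈ range (m + n + b + 1), TT p a b * TT a m n)
      = ∑ c ∈ range (m + n + b + 1), TT p m c * TT c n b := by
  intro p
  induction p using Nat.strong_induction_on with
  | _ p ih =>
  rcases Nat.lt_or_ge p (m + n + b + 1) with hp | hp
  · have h : ∑ q ∈ range (m + n + b + 1),
        (∑ a ∈ range (m + n + b + 1), TT q a b * TT a m n) * p.choose q
        = ∑ q ∈ range (m + n + b + 1),
        (∑ c ∈ range (m + n + b + 1), TT q m c * TT c n b) * p.choose q := by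
      rw [masterL, masterR, mul_assoc]
    have e1 : ∑ q ∈ range (p + 1),
        (∑ a ∈ range (m + n + b + 1), TT q a b * TT a m n) * p.choose q
        = ∑ q ∈ range (m + n + b + 1),
        (∑ a ∈ range (m + n + b + 1), TT q a b * TT a m n) * p.choose q :=
      Finset.sum_subset (Finset.range_subset_range.2 hp) (fun q _ hq => by
        rw [Nat.choose_eq_zero_of_lt (by simp only [Finset.mem_range] at hq; omega), mul_zero])
    have e2 : ∑ q ∈ range (p + 1),
        (∑ c ∈ range (m + n + b + 1), TT q m c * TT c n b) * p.choose q
        = ∑ q ∈ range (m + n + b + 1),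
        (∑ c ∈ range (m + n + b + 1), TT q m c * TT c n b) * p.choose q :=
      Finset.sum_subset (Finset.range_subset_range.2 hp) (fun q _ hq => by
        rw [Nat.choose_eq_zero_of_lt (by simp only [Finset.mem_range] at hq; omega), mul_zero])
    rw [← e1, ← e2,
      Finset.sum_range_succ
        (fun q => (∑ a ∈ range (m + n + b + 1), TT q a b * TT a m n) * p.choose q) p,
      Finset.sum_range_succ
        (fun q => (∑ c ∈ range (m + n + b + 1), TT q m c * TT c n b) * p.choose q) p] at h
    have hcong : ∑ q ∈ range p,
        (∑ a ∈ range (m + n + b + 1), TT q a b * TT a m n) * p.choose q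
        = ∑ q ∈ range p,
        (∑ c ∈ range (m + n + b + 1), TT q m c * TT c n b) * p.choose q :=
      Finset.sum_congr rfl fun q hq => by rw [ih q (Finset.mem_range.1 hq)]
    rw [hcong] at h
    have h2 := Nat.add_left_cancel h
    rwa [Nat.choose_self, mul_one, mul_one] at h2
  · rw [Finset.sum_eq_zero, Finset.sum_eq_zero]
    · intro c _
      rcases le_or_gt c (n + b) with h | h
      · rw [TT_zero_add (show m + c < p by omega), zero_mul]
      · rw [TT_zero_add h, mul_zero]
    · intro a _
      rcases le_or_gt a (m + n) with h | h
      · rw [TT_zero_add (show a + b < p by omega), zero_mul]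
      · rw [TT_zero_add h, mul_zero]

lemma key (p m n b : ℕ) :
    ∑ a ∈ range (p + 1), TT p a b * TT a m n
      = ∑ c ∈ range (p + 1), TT p m c * TT c n b := by
  have e1 : ∑ a ∈ range (p + 1), TT p a b * TT a m n
      = ∑ a ∈ range (p + m + n + b + 2), TT p a b * TT a m n :=
    Finset.sum_subset (Finset.range_subset_range.2 (by omega)) (fun a _ ha => by
      rw [TT_zero_left (show p < a by simp only [Finset.mem_range] at ha; omega), zero_mul])
  have e2 : ∑ a ∈ range (m + n + b + 1), TT p a b * TT a m n
      = ∑ a ∈ range (p + m + n + b + 2), TT p a b * TT a m n :=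
    Finset.sum_subset (Finset.range_subset_range.2 (by omega)) (fun a _ ha => by
      rw [TT_zero_add (show m + n < a by simp only [Finset.mem_range] at ha; omega), mul_zero])
  have e3 : ∑ c ∈ range (p + 1), TT p m c * TT c n b
      = ∑ c ∈ range (p + m + n + b + 2), TT p m c * TT c n b :=
    Finset.sum_subset (Finset.range_subset_range.2 (by omega)) (fun c _ hc => by
      rw [TT_zero_right (show p < c by simp only [Finset.mem_range] at hc; omega), zero_mul])
  have e4 : ∑ c ∈ range (m + n + b + 1), TT p m c * TT c n b
      = ∑ c ∈ range (p + m + n + b + 2), TT p m c * TT c n b :=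
    Finset.sum_subset (Finset.range_subset_range.2 (by omega)) (fun c _ hc => by
      rw [TT_zero_add (show n + b < c by simp only [Finset.mem_range] at hc; omega), mul_zero])
  rw [e1, ← e2, key_aux, e4, ← e3]

lemma Icc_filter (j m : ℕ) :
    Finset.Icc (j - m) j = (Finset.range (j + 1)).filter (fun n => j ≤ m + n) := by
  ext x
  simp only [Finset.mem_Icc, Finset.mem_filter, Finset.mem_range, Nat.lt_succ_iff]
  omega

lemma umul_eq {C : Type*} [CommRing C] (lam : C) (u v : ℕ → C) (j : ℕ) :
    umul lam u v j = ∑ m ∈ range (j + 1), ∑ n ∈ range (j + 1),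
      (TT j m n : C) * lam ^ (m + n - j) * u m * v n := by
  unfold umul
  refine Finset.sum_congr rfl fun m _ => ?_
  rw [Icc_filter, Finset.sum_filter]
  refine Finset.sum_congr rfl fun n _ => ?_
  unfold TT
  split_ifs with h
  · push_cast; ring
  · simp

lemma umul_eq' {C : Type*} [CommRing C] (lam : C) (u v : ℕ → C) {j p : ℕ} (hj : j ≤ p) :
    umul lam u v j = ∑ m ∈ range (p + 1), ∑ n ∈ range (p + 1),
      (TT j m n : C) * lam ^ (m + n - j) * u m * v n := by
  rw [umul_eq]
  calc ∑ m ∈ range (j + 1), ∑ n ∈ range (j + 1),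
        (TT j m n : C) * lam ^ (m + n - j) * u m * v n
      = ∑ m ∈ range (j + 1), ∑ n ∈ range (p + 1),
        (TT j m n : C) * lam ^ (m + n - j) * u m * v n := by
        refine Finset.sum_congr rfl fun m _ => ?_
        refine Finset.sum_subset (Finset.range_subset_range.2 (by omega)) fun n _ hn => ?_
        rw [TT_zero_right (show j < n by simp only [Finset.mem_range] at hn; omega)]
        simp
    _ = ∑ m ∈ range (p + 1), ∑ n ∈ range (p + 1),
        (TT j m n : C) * lam ^ (m + n - j) * u m * v n := by
        refine Finset.sum_subset (Finset.range_subset_range.2 (by omega)) fun m _ hm => ?_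
        refine Finset.sum_eq_zero fun n _ => ?_
        rw [TT_zero_left (show j < m by simp only [Finset.mem_range] at hm; omega)]
        simp

lemma sum_comm3 {M : Type*} [AddCommMonoid M] (s t r : Finset ℕ) (f : ℕ → ℕ → ℕ → M) :
    ∑ a ∈ s, ∑ m ∈ t, ∑ n ∈ r, f a m n = ∑ m ∈ t, ∑ n ∈ r, ∑ a ∈ s, f a m n := by
  rw [Finset.sum_comm]
  exact Finset.sum_congr rfl fun m _ => Finset.sum_comm

lemma sum_comm4 {M : Type*} [AddCommMonoid M] (s : Finset ℕ) (f : ℕ → ℕ → ℕ → ℕ → M) :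
    ∑ a ∈ s, ∑ b ∈ s, ∑ m ∈ s, ∑ n ∈ s, f a b m n
      = ∑ m ∈ s, ∑ n ∈ s, ∑ b ∈ s, ∑ a ∈ s, f a b m n := by
  calc ∑ a ∈ s, ∑ b ∈ s, ∑ m ∈ s, ∑ n ∈ s, f a b m n
      = ∑ b ∈ s, ∑ a ∈ s, ∑ m ∈ s, ∑ n ∈ s, f a b m n := Finset.sum_comm
    _ = ∑ b ∈ s, ∑ m ∈ s, ∑ n ∈ s, ∑ a ∈ s, f a b m n :=
        Finset.sum_congr rfl fun b _ => sum_comm3 s s s _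
    _ = ∑ m ∈ s, ∑ b ∈ s, ∑ n ∈ s, ∑ a ∈ s, f a b m n := Finset.sum_comm
    _ = ∑ m ∈ s, ∑ n ∈ s, ∑ b ∈ s, ∑ a ∈ s, f a b m n :=
        Finset.sum_congr rfl fun m _ => Finset.sum_comm

lemma mergeL {C : Type*} [CommRing C] (lam : C) (u v w : ℕ → C) (p a b m n : ℕ) :
    (TT p a b : C) * lam ^ (a + b - p) *
        ((TT a m n : C) * lam ^ (m + n - a) * u m * v n) * w b
      = ((TT p a b * TT a m n : ℕ) : C) * lam ^ (m + n + b - p) * u m * v n * w b := by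
  by_cases h1 : p ≤ a + b
  · by_cases h2 : a ≤ m + n
    · rw [show m + n + b - p = (a + b - p) + (m + n - a) by omega, pow_add]
      push_cast; ring
    · rw [show TT a m n = 0 from by unfold TT; rw [if_neg h2]]
      push_cast; ring
  · rw [show TT p a b = 0 from by unfold TT; rw [if_neg h1]]
    push_cast; ring

lemma mergeR {C : Type*} [CommRing C] (lam : C) (u v w : ℕ → C) (p c b m n : ℕ) :
    (TT p m c : C) * lam ^ (m + c - p) * u m *
        ((TT c n b : C) * lam ^ (n + b - c) * v n * w b)
      = ((TT p m c * TT c n b : ℕ) : C) * lam ^ (m + n + b - p) * u m * v n * w b := by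
  by_cases h1 : p ≤ m + c
  · by_cases h2 : c ≤ n + b
    · rw [show m + n + b - p = (m + c - p) + (n + b - c) by omega, pow_add]
      push_cast; ring
    · rw [show TT c n b = 0 from by unfold TT; rw [if_neg h2]]
      push_cast; ring
  · rw [show TT p m c = 0 from by unfold TT; rw [if_neg h1]]
    push_cast; ring

theorem umul_comm_ring_structure {C : Type*} [CommRing C] (lam : C) :
    (∀ u v : ℕ → C, umul lam u v = umul lam v u) ∧
    (∀ u v w : ℕ → C, umul lam (umul lam u v) w = umul lam u (umul lam v w)) ∧
    (∀ u : ℕ → C, umul lam (uone C) u = u) ∧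
    (∀ u : ℕ → C, umul lam u (uone C) = u) ∧
    (∀ u v w : ℕ → C, umul lam (u + v) w = umul lam u w + umul lam v w) ∧
    (∀ u v w : ℕ → C, umul lam u (v + w) = umul lam u v + umul lam u w) ∧
    (∀ (c : C) (u v : ℕ → C), umul lam (c • u) v = c • umul lam u v) ∧
    (∀ (c : C) (u v : ℕ → C), umul lam u (c • v) = c • umul lam u v) := by
  refine ⟨?comm, ?assoc, ?onel, ?oner, ?addl, ?addr, ?smull, ?smulr⟩
  case comm =>
    intro u v
    funext j
    rw [umul_eq, umul_eq, Finset.sum_comm]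
    refine Finset.sum_congr rfl fun x _ => Finset.sum_congr rfl fun y _ => ?_
    rw [TT_symm j y x, show y + x - j = x + y - j by omega]
    ring
  case assoc =>
    intro u v w
    funext p
    have hL : umul lam (umul lam u v) w p
        = ∑ m ∈ range (p + 1), ∑ n ∈ range (p + 1), ∑ b ∈ range (p + 1),
            ((∑ a ∈ range (p + 1), TT p a b * TT a m n : ℕ) : C) *
              lam ^ (m + n + b - p) * u m * v n * w b := by
      rw [umul_eq]
      calc ∑ a ∈ range (p + 1), ∑ b ∈ range (p + 1),
            (TT p a b : C) * lam ^ (a + b - p) * umul lam u v a * w b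
          = ∑ a ∈ range (p + 1), ∑ b ∈ range (p + 1), ∑ m ∈ range (p + 1), ∑ n ∈ range (p + 1),
              ((TT p a b * TT a m n : ℕ) : C) * lam ^ (m + n + b - p) * u m * v n * w b := by
            refine Finset.sum_congr rfl fun a ha => Finset.sum_congr rfl fun b _ => ?_
            rw [umul_eq' lam u v (Nat.lt_succ_iff.1 (Finset.mem_range.1 ha))]
            rw [Finset.mul_sum, Finset.sum_mul]
            refine Finset.sum_congr rfl fun m _ => ?_
            rw [Finset.mul_sum, Finset.sum_mul]
            exact Finset.sum_congr rfl fun n _ => mergeL lam u v w p a b m n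
        _ = ∑ m ∈ range (p + 1), ∑ n ∈ range (p + 1), ∑ b ∈ range (p + 1), ∑ a ∈ range (p + 1),
              ((TT p a b * TT a m n : ℕ) : C) * lam ^ (m + n + b - p) * u m * v n * w b :=
            sum_comm4 _ _
        _ = ∑ m ∈ range (p + 1), ∑ n ∈ range (p + 1), ∑ b ∈ range (p + 1),
              ((∑ a ∈ range (p + 1), TT p a b * TT a m n : ℕ) : C) *
                lam ^ (m + n + b - p) * u m * v n * w b := by
            refine Finset.sum_congr rfl fun m _ => Finset.sum_congr rfl fun n _ =>
              Finset.sum_congr rfl fun b _ => ?_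
            rw [← Finset.sum_mul, ← Finset.sum_mul, ← Finset.sum_mul, ← Finset.sum_mul,
              ← Nat.cast_sum]
    have hR : umul lam u (umul lam v w) p
        = ∑ m ∈ range (p + 1), ∑ n ∈ range (p + 1), ∑ b ∈ range (p + 1),
            ((∑ c ∈ range (p + 1), TT p m c * TT c n b : ℕ) : C) *
              lam ^ (m + n + b - p) * u m * v n * w b := by
      rw [umul_eq]
      calc ∑ m ∈ range (p + 1), ∑ c ∈ range (p + 1),
            (TT p m c : C) * lam ^ (m + c - p) * u m * umul lam v w c
          = ∑ m ∈ range (p + 1), ∑ c ∈ range (p + 1), ∑ n ∈ range (p + 1), ∑ b ∈ range (p + 1),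
              ((TT p m c * TT c n b : ℕ) : C) * lam ^ (m + n + b - p) * u m * v n * w b := by
            refine Finset.sum_congr rfl fun m _ => Finset.sum_congr rfl fun c hc => ?_
            rw [umul_eq' lam v w (Nat.lt_succ_iff.1 (Finset.mem_range.1 hc))]
            rw [Finset.mul_sum]
            refine Finset.sum_congr rfl fun n _ => ?_
            rw [Finset.mul_sum]
            exact Finset.sum_congr rfl fun b _ => mergeR lam u v w p c b m n
        _ = ∑ m ∈ range (p + 1), ∑ n ∈ range (p + 1), ∑ b ∈ range (p + 1), ∑ c ∈ range (p + 1),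
              ((TT p m c * TT c n b : ℕ) : C) * lam ^ (m + n + b - p) * u m * v n * w b :=
            Finset.sum_congr rfl fun m _ => sum_comm3 _ _ _ _
        _ = ∑ m ∈ range (p + 1), ∑ n ∈ range (p + 1), ∑ b ∈ range (p + 1),
              ((∑ c ∈ range (p + 1), TT p m c * TT c n b : ℕ) : C) *
                lam ^ (m + n + b - p) * u m * v n * w b := by
            refine Finset.sum_congr rfl fun m _ => Finset.sum_congr rfl fun n _ =>
              Finset.sum_congr rfl fun b _ => ?_
            rw [← Finset.sum_mul, ← Finset.sum_mul, ← Finset.sum_mul, ← Finset.sum_mul,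
              ← Nat.cast_sum]
    rw [hL, hR]
    refine Finset.sum_congr rfl fun m _ => Finset.sum_congr rfl fun n _ =>
      Finset.sum_congr rfl fun b _ => ?_
    rw [key p m n b]
  case onel =>
    intro u
    funext j
    rw [umul_eq]
    rw [Finset.sum_eq_single 0
      (fun m _ hm => Finset.sum_eq_zero fun n _ => by simp [uone, hm])
      (fun h => absurd (Finset.mem_range.2 (Nat.succ_pos j)) h)]
    rw [Finset.sum_eq_single j
      (fun n hn hn' => by
        rw [TT_zero_add (show 0 + n < j by
          simp only [Finset.mem_range, Nat.lt_succ_iff] at hn; omega)]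
        simp)
      (fun h => absurd (Finset.mem_range.2 (Nat.lt_succ_self j)) h)]
    simp [TT, uone]
  case oner =>
    intro u
    funext j
    rw [umul_eq]
    have h1 : ∀ m ∈ range (j + 1),
        (∑ n ∈ range (j + 1), (TT j m n : C) * lam ^ (m + n - j) * u m * uone C n)
          = (TT j m 0 : C) * lam ^ (m + 0 - j) * u m := by
      intro m _
      rw [Finset.sum_eq_single 0
        (fun n _ hn => by simp [uone, hn])
        (fun h => absurd (Finset.mem_range.2 (Nat.succ_pos j)) h)]
      simp [uone]
    rw [Finset.sum_congr rfl h1]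
    rw [Finset.sum_eq_single j
      (fun m hm hm' => by
        rw [TT_zero_add (show m + 0 < j by
          simp only [Finset.mem_range, Nat.lt_succ_iff] at hm; omega)]
        simp)
      (fun h => absurd (Finset.mem_range.2 (Nat.lt_succ_self j)) h)]
    simp [TT]
  case addl =>
    intro u v w
    funext j
    simp only [umul, Pi.add_apply]
    rw [← Finset.sum_add_distrib]
    refine Finset.sum_congr rfl fun m _ => ?_
    rw [← Finset.sum_add_distrib]
    exact Finset.sum_congr rfl fun n _ => by ring
  case addr =>
    intro u v w
    funext j
    simp only [umul, Pi.add_apply]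
    rw [← Finset.sum_add_distrib]
    refine Finset.sum_congr rfl fun m _ => ?_
    rw [← Finset.sum_add_distrib]
    exact Finset.sum_congr rfl fun n _ => by ring
  case smull =>
    intro c u v
    funext j
    simp only [umul, Pi.smul_apply, smul_eq_mul, Finset.mul_sum]
    exact Finset.sum_congr rfl fun m _ => Finset.sum_congr rfl fun n _ => by ring
  case smulr =>
    intro c u v
    funext j
    simp only [umul, Pi.smul_apply, smul_eq_mul, Finset.mul_sum]
    exact Finset.sum_congr rfl fun m _ => Finset.sum_congr rfl fun n _ => by ring
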